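/- Let ψ : [0,1] → ℝ be continuous piecewise affine and constant on [u₂, 1] for some u₂ < 1. Let φ : [0,1] → ℝ be continuous piecewise affine with φ(0) = 0, φ(u) ≥ ψ(u) for all u ∈ [0,1], and φ = ψ on [u₁, 1] for some u₁ < 1. Then τ(φ) ≤ τ(ψ) + 2·ψ(0). In particular, if ψ(0) ≤ −1 then τ(φ) ≤ τ(ψ) − 2. -/

import Mathlib

open MeasureTheory Set

/-- `f : ℝ → ℝ` is *continuous piecewise affine* on `[0,1]`: it is continuous on `[0,1]`
and there is a finite partition `0 = t₀ < t₁ < ⋯ < t_m = 1` such that `f` is affine on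
each subinterval `[t_{j}, t_{j+1}]`. -/
def CtsPiecewiseAffine (f : ℝ → ℝ) : Prop :=
  ContinuousOn f (Set.Icc (0:ℝ) 1) ∧
  ∃ (m : ℕ) (t : ℕ → ℝ), 0 < m ∧ t 0 = 0 ∧ t m = 1 ∧
    (∀ j < m, t j < t (j+1)) ∧
    (∀ j < m, ∃ a b : ℝ, ∀ x ∈ Set.Icc (t j) (t (j+1)), f x = a * x + b)

/-- The *twist* of an edgepath-system function `f`:
`τ(f) = ∫₀¹ (2/(1−u)²)·f′(u) du`. -/
noncomputable def twist (f : ℝ → ℝ) : ℝ :=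
  ∫ u in (0:ℝ)..1, (2/(1-u)^2) * deriv f u

/- ### Auxiliary lemmas -/

private lemma II_congr_Ioo {p q : ℝ} (hpq : p ≤ q) {F G : ℝ → ℝ}
    (h : ∀ u ∈ Set.Ioo p q, F u = G u) (hG : IntervalIntegrable G volume p q) :
    IntervalIntegrable F volume p q := by
  rw [intervalIntegrable_iff_integrableOn_Ioo_of_le hpq] at hG ⊢
  exact hG.congr_fun (fun u hu => (h u hu).symm) measurableSet_Ioo

private lemma int_congr_Ioo {p q : ℝ} (hpq : p ≤ q) {F G : ℝ → ℝ}
    (h : ∀ u ∈ Set.Ioo p q, F u = G u) :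
    (∫ u in p..q, F u) = ∫ u in p..q, G u := by
  rw [intervalIntegral.integral_of_le hpq, intervalIntegral.integral_of_le hpq,
    MeasureTheory.integral_Ioc_eq_integral_Ioo, MeasureTheory.integral_Ioc_eq_integral_Ioo]
  exact MeasureTheory.setIntegral_congr_fun measurableSet_Ioo h

private lemma deriv_affine_on {p q : ℝ} {f : ℝ → ℝ} {a b : ℝ}
    (hf : ∀ x ∈ Set.Icc p q, f x = a * x + b) {u : ℝ} (hu : u ∈ Set.Ioo p q) :
    deriv f u = a := by
  have hev : f =ᶠ[nhds u] fun x => a * x + b := by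
    filter_upwards [Ioo_mem_nhds hu.1 hu.2] with x hx
    exact hf x (Set.Ioo_subset_Icc_self hx)
  rw [hev.deriv_eq]
  simpa using (((hasDerivAt_id u).const_mul a).add_const b).deriv

private lemma deriv_const_on {p q : ℝ} {f : ℝ → ℝ} {C : ℝ}
    (hf : ∀ x ∈ Set.Icc p q, f x = C) {u : ℝ} (hu : u ∈ Set.Ioo p q) :
    deriv f u = 0 := by
  have hev : f =ᶠ[nhds u] fun _ => C := by
    filter_upwards [Ioo_mem_nhds hu.1 hu.2] with x hx
    exact hf x (Set.Ioo_subset_Icc_self hx)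
  rw [hev.deriv_eq, deriv_const]

private lemma hasDerivAt_w_affine (a b : ℝ) {u : ℝ} (hu : u ≠ 1) :
    HasDerivAt (fun x => 2/(1-x)^2 * (a*x+b))
      (2/(1-u)^2 * a + 4/(1-u)^3 * (a*u+b)) u := by
  have h1 : (1 - u) ≠ 0 := sub_ne_zero.mpr (Ne.symm hu)
  have hw : HasDerivAt (fun x : ℝ => 2/(1-x)^2) (4/(1-u)^3) u := by
    have hbase : HasDerivAt (fun x : ℝ => (1:ℝ)-x) (-1) u := (hasDerivAt_id u).const_sub 1
    have hden : HasDerivAt (fun x : ℝ => ((1:ℝ)-x)^2) (2*(1-u)*(-1)) u := by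
      simpa [mul_comm, mul_assoc] using hbase.fun_pow 2
    have := (hasDerivAt_const u (2:ℝ)).fun_div hden (pow_ne_zero 2 h1)
    refine this.congr_deriv ?_
    field_simp
    ring
  have hl : HasDerivAt (fun x : ℝ => a*x+b) a u := by
    simpa using ((hasDerivAt_id u).const_mul a).add_const b
  have := hw.fun_mul hl
  refine this.congr_deriv ?_
  ring

private lemma cont_w {p q : ℝ} (hq : ∀ u ∈ Set.Icc p q, (1:ℝ) - u ≠ 0) (c : ℝ) (k : ℕ) :
    ContinuousOn (fun u : ℝ => c/(1-u)^k) (Set.Icc p q) := by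
  apply ContinuousOn.div continuousOn_const (by fun_prop)
  intro u hu
  exact pow_ne_zero _ (hq u hu)

/-- Integration by parts on one affine piece staying left of `1`. -/
private lemma piece1 {p q : ℝ} (hpq : p < q) (hq : q < 1) {f : ℝ → ℝ} {a b : ℝ}
    (hf : ∀ x ∈ Set.Icc p q, f x = a * x + b) (C : ℝ) :
    IntervalIntegrable (fun u => 2/(1-u)^2 * deriv f u) volume p q ∧
    IntervalIntegrable (fun u => 4/(1-u)^3 * (f u - C)) volume p q ∧
    (∫ u in p..q, 2/(1-u)^2 * deriv f u)
      = (2/(1-q)^2 * (f q - C) - 2/(1-p)^2 * (f p - C))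
        - ∫ u in p..q, 4/(1-u)^3 * (f u - C) := by
  have huIcc : Set.uIcc p q = Set.Icc p q := Set.uIcc_of_le hpq.le
  have hne : ∀ u ∈ Set.Icc p q, (1:ℝ) - u ≠ 0 := by
    intro u hu
    have : u < 1 := lt_of_le_of_lt hu.2 hq
    intro h; linarith [h]
  have hcA : ContinuousOn (fun u : ℝ => 2/(1-u)^2 * a) (Set.Icc p q) :=
    (cont_w hne 2 2).mul continuousOn_const
  have hcB : ContinuousOn (fun u : ℝ => 4/(1-u)^3 * (a*u+(b-C))) (Set.Icc p q) :=
    (cont_w hne 4 3).mul (by fun_prop)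
  have hIA : IntervalIntegrable (fun u : ℝ => 2/(1-u)^2 * a) volume p q := by
    rw [← huIcc] at hcA; exact hcA.intervalIntegrable
  have hIB : IntervalIntegrable (fun u : ℝ => 4/(1-u)^3 * (a*u+(b-C))) volume p q := by
    rw [← huIcc] at hcB; exact hcB.intervalIntegrable
  have hI1 : IntervalIntegrable (fun u => 2/(1-u)^2 * deriv f u) volume p q := by
    refine II_congr_Ioo hpq.le (fun u hu => ?_) hIA
    rw [deriv_affine_on hf hu]
  have hI2 : IntervalIntegrable (fun u => 4/(1-u)^3 * (f u - C)) volume p q := by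
    refine II_congr_Ioo hpq.le (fun u hu => ?_) hIB
    rw [hf u (Set.Ioo_subset_Icc_self hu)]; ring
  refine ⟨hI1, hI2, ?_⟩
  have hkey := intervalIntegral.integral_eq_sub_of_hasDerivAt
    (f := fun x : ℝ => 2/(1-x)^2 * (a*x+(b-C)))
    (f' := fun u : ℝ => 2/(1-u)^2 * a + 4/(1-u)^3 * (a*u+(b-C)))
    (a := p) (b := q)
    (fun u hu => by
      refine hasDerivAt_w_affine a (b-C) ?_
      rw [huIcc] at hu
      intro h
      exact hne u hu (by rw [h]; norm_num))
    (hIA.add hIB)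
  have hsplit : (∫ u in p..q, (2/(1-u)^2 * a + 4/(1-u)^3 * (a*u+(b-C))))
      = (∫ u in p..q, 2/(1-u)^2 * a) + ∫ u in p..q, 4/(1-u)^3 * (a*u+(b-C)) :=
    intervalIntegral.integral_add hIA hIB
  have e1 : (∫ u in p..q, 2/(1-u)^2 * deriv f u) = ∫ u in p..q, 2/(1-u)^2 * a :=
    int_congr_Ioo hpq.le (fun u hu => by rw [deriv_affine_on hf hu])
  have e2 : (∫ u in p..q, 4/(1-u)^3 * (f u - C)) = ∫ u in p..q, 4/(1-u)^3 * (a*u+(b-C)) :=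
    int_congr_Ioo hpq.le (fun u hu => by
      rw [hf u (Set.Ioo_subset_Icc_self hu)]; ring)
  have hfq : f q = a*q+b := hf q ⟨hpq.le, le_refl q⟩
  have hfp : f p = a*p+b := hf p ⟨le_refl p, hpq.le⟩
  rw [e1, e2, hfq, hfp]
  have hbdry : 2/(1-q)^2 * (a*q+b - C) - 2/(1-p)^2 * (a*p+b - C)
      = 2/(1-q)^2 * (a*q+(b-C)) - 2/(1-p)^2 * (a*p+(b-C)) := by ring
  rw [hbdry]
  linarith [hkey, hsplit]

/-- The degenerate piece: `f` is constant `C` on `[p,q]`. -/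
private lemma piece2 {p q : ℝ} (hpq : p < q) {f : ℝ → ℝ} {C : ℝ}
    (hf : ∀ x ∈ Set.Icc p q, f x = C) :
    IntervalIntegrable (fun u => 2/(1-u)^2 * deriv f u) volume p q ∧
    IntervalIntegrable (fun u => 4/(1-u)^3 * (f u - C)) volume p q ∧
    (∫ u in p..q, 2/(1-u)^2 * deriv f u) = 0 ∧
    (∫ u in p..q, 4/(1-u)^3 * (f u - C)) = 0 := by
  have h1 : ∀ u ∈ Set.Ioo p q, 2/(1-u)^2 * deriv f u = (fun _ : ℝ => (0:ℝ)) u := by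
    intro u hu; simp [deriv_const_on hf hu]
  have h2 : ∀ u ∈ Set.Ioo p q, 4/(1-u)^3 * (f u - C) = (fun _ : ℝ => (0:ℝ)) u := by
    intro u hu; simp [hf u (Set.Ioo_subset_Icc_self hu)]
  refine ⟨II_congr_Ioo hpq.le h1 intervalIntegrable_const,
    II_congr_Ioo hpq.le h2 intervalIntegrable_const, ?_, ?_⟩
  · rw [int_congr_Ioo hpq.le h1]; simp
  · rw [int_congr_Ioo hpq.le h2]; simp

/-- Main integration-by-parts identity: if `f` is continuous piecewise affine and equal
to `C` on `[c,1]` with `c < 1`, then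
`τ(f) = −2(f 0 − C) − ∫₀¹ (4/(1−u)³)(f u − C) du`, and the integrand is integrable. -/
private lemma lemA {f : ℝ → ℝ} (hf : CtsPiecewiseAffine f) {c C : ℝ} (hc1 : c < 1)
    (hC : ∀ u ∈ Set.Icc c 1, f u = C) :
    IntervalIntegrable (fun u => 4/(1-u)^3 * (f u - C)) volume 0 1 ∧
    twist f = -(2 * (f 0 - C)) - ∫ u in (0:ℝ)..1, 4/(1-u)^3 * (f u - C) := by
  obtain ⟨-, m, t, hm, ht0, htm, hinc, haff⟩ := hf
  have hmono : ∀ k, k ≤ m → ∀ j, j ≤ k → t j ≤ t k := by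
    intro k
    induction k with
    | zero =>
      intro _ j hj
      obtain rfl := Nat.le_zero.mp hj
      exact le_rfl
    | succ n ih =>
      intro hk j hj
      rcases Nat.eq_or_lt_of_le hj with h | h
      · rw [h]
      · exact le_trans (ih (by omega) j (by omega)) (hinc n (by omega)).le
  set B : ℕ → ℝ := fun j => 2/(1-(t j))^2 * (f (t j) - C) with hB
  have hP : ∀ j < m,
      IntervalIntegrable (fun u => 2/(1-u)^2 * deriv f u) volume (t j) (t (j+1)) ∧
      IntervalIntegrable (fun u => 4/(1-u)^3 * (f u - C)) volume (t j) (t (j+1)) ∧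
      (∫ u in t j..t (j+1), 2/(1-u)^2 * deriv f u)
        = (B (j+1) - B j) - ∫ u in t j..t (j+1), 4/(1-u)^3 * (f u - C) := by
    intro j hj
    obtain ⟨a, b, hab⟩ := haff j hj
    by_cases hq : t (j+1) < 1
    · exact piece1 (hinc j hj) hq hab C
    · have hq1 : t (j+1) = 1 :=
        le_antisymm (by rw [← htm]; exact hmono m le_rfl (j+1) hj) (not_lt.mp hq)
      have htj1 : t j < 1 := by rw [← hq1]; exact hinc j hj
      have hs1lt : max (t j) c < 1 := max_lt htj1 hc1
      have hs1mem : max (t j) c ∈ Set.Icc (t j) (t (j+1)) :=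
        ⟨le_max_left _ _, by rw [hq1]; exact hs1lt.le⟩
      have h1mem : (1:ℝ) ∈ Set.Icc (t j) (t (j+1)) := ⟨htj1.le, by rw [hq1]⟩
      have eA : a * (max (t j) c) + b = C := by
        rw [← hab _ hs1mem]; exact hC _ ⟨le_max_right _ _, hs1lt.le⟩
      have eB : a * 1 + b = C := by
        rw [← hab _ h1mem]; exact hC 1 ⟨hc1.le, le_rfl⟩
      have ha : a = 0 := by
        have hz : a * (1 - max (t j) c) = 0 := by linarith
        rcases mul_eq_zero.mp hz with h | h
        · exact h
        · exfalso; linarith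
      have hb : b = C := by rw [ha] at eB; linarith
      have hconst : ∀ x ∈ Set.Icc (t j) (t (j+1)), f x = C := fun x hx => by
        rw [hab x hx, ha, hb]; ring
      obtain ⟨i1, i2, e1, e2⟩ := piece2 (hinc j hj) hconst
      refine ⟨i1, i2, ?_⟩
      have b1 : B (j+1) = 0 := by
        simp [hB, hconst _ ⟨(hinc j hj).le, le_rfl⟩]
      have b0 : B j = 0 := by
        simp [hB, hconst _ ⟨le_rfl, (hinc j hj).le⟩]
      rw [e1, e2, b1, b0]; ring
  have hsum1 : ∑ j ∈ Finset.range m, ∫ u in t j..t (j+1), 2/(1-u)^2 * deriv f u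
      = ∫ u in (t 0)..(t m), 2/(1-u)^2 * deriv f u :=
    intervalIntegral.sum_integral_adjacent_intervals (fun k hk => (hP k hk).1)
  have hsum2 : ∑ j ∈ Finset.range m, ∫ u in t j..t (j+1), 4/(1-u)^3 * (f u - C)
      = ∫ u in (t 0)..(t m), 4/(1-u)^3 * (f u - C) :=
    intervalIntegral.sum_integral_adjacent_intervals (fun k hk => (hP k hk).2.1)
  rw [ht0, htm] at hsum1 hsum2
  have hII : IntervalIntegrable (fun u => 4/(1-u)^3 * (f u - C)) volume 0 1 := by
    have := IntervalIntegrable.trans_iterate (a := t) (n := m) (fun k hk => (hP k hk).2.1)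
    rwa [ht0, htm] at this
  refine ⟨hII, ?_⟩
  have hB0 : B 0 = 2 * (f 0 - C) := by
    rw [hB]; simp only [ht0]; norm_num
  have hBm : B m = 0 := by
    rw [hB]; simp only [htm]
    rw [hC 1 ⟨hc1.le, le_rfl⟩]; ring
  have htw : twist f
      = ∑ j ∈ Finset.range m,
          ((B (j+1) - B j) - ∫ u in t j..t (j+1), 4/(1-u)^3 * (f u - C)) := by
    rw [twist, ← hsum1]
    exact Finset.sum_congr rfl (fun j hj => (hP j (Finset.mem_range.mp hj)).2.2)
  rw [htw, Finset.sum_sub_distrib, Finset.sum_range_sub, hsum2, hBm, hB0]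
  ring

/-- (Function-level form of Lemma 3.3(1).) Let `ψ` be continuous piecewise affine on
`[0,1]`, constant on `[u₂,1]` for some `u₂ < 1`. Let `φ` be continuous piecewise affine
with `φ 0 = 0`, `φ ≥ ψ` on `[0,1]`, and `φ = ψ` on `[u₁,1]` for some `u₁ < 1`.
Then `τ(φ) ≤ τ(ψ) + 2·ψ(0)`; in particular if `ψ(0) ≤ −1` then `τ(φ) ≤ τ(ψ) − 2`. -/
theorem stmt2 (ψ : ℝ → ℝ) (hψ : CtsPiecewiseAffine ψ)
    (u₂ : ℝ) (hu₂ : u₂ < 1)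
    (hc : ∃ c : ℝ, ∀ u ∈ Set.Icc u₂ (1:ℝ), ψ u = c)
    (φ : ℝ → ℝ) (hφ : CtsPiecewiseAffine φ) (hφ0 : φ 0 = 0)
    (hge : ∀ u ∈ Set.Icc (0:ℝ) 1, ψ u ≤ φ u)
    (u₁ : ℝ) (hu₁ : u₁ < 1)
    (heq : ∀ u ∈ Set.Icc u₁ (1:ℝ), φ u = ψ u) :
    twist φ ≤ twist ψ + 2 * ψ 0 ∧ (ψ 0 ≤ -1 → twist φ ≤ twist ψ - 2) := by
  obtain ⟨Cψ, hCψ⟩ := hc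
  have hc1 : max u₁ u₂ < 1 := max_lt hu₁ hu₂
  have hψC : ∀ u ∈ Set.Icc (max u₁ u₂) 1, ψ u = Cψ := fun u hu =>
    hCψ u ⟨le_trans (le_max_right u₁ u₂) hu.1, hu.2⟩
  have hφC : ∀ u ∈ Set.Icc (max u₁ u₂) 1, φ u = Cψ := fun u hu => by
    rw [heq u ⟨le_trans (le_max_left u₁ u₂) hu.1, hu.2⟩]; exact hψC u hu
  obtain ⟨Iψ, hψe⟩ := lemA hψ hc1 hψC
  obtain ⟨Iφ, hφe⟩ := lemA hφ hc1 hφC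
  have hsub : (∫ u in (0:ℝ)..1, 4/(1-u)^3 * (φ u - Cψ))
        - (∫ u in (0:ℝ)..1, 4/(1-u)^3 * (ψ u - Cψ))
      = ∫ u in (0:ℝ)..1, 4/(1-u)^3 * (φ u - ψ u) := by
    rw [← intervalIntegral.integral_sub Iφ Iψ]
    apply intervalIntegral.integral_congr
    intro u _
    simp only
    ring
  have hnn : 0 ≤ ∫ u in (0:ℝ)..1, 4/(1-u)^3 * (φ u - ψ u) := by
    apply intervalIntegral.integral_nonneg (by norm_num)
    intro u hu
    apply mul_nonneg
    · exact div_nonneg (by norm_num) (pow_nonneg (by linarith [hu.2]) 3)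
    · linarith [hge u hu]
  have h1 : twist φ ≤ twist ψ + 2 * ψ 0 := by
    rw [hφe, hψe, hφ0]
    linarith [hnn, hsub]
  exact ⟨h1, fun h0 => by linarith⟩
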